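/- Let g, h, g', h' ∈ ℚ with h ≠ 0, h' ≠ 0, g ≠ 0, g' ≠ 0, and suppose there exists λ ∈ ℚ, λ ≠ 0, such that 24g'+6 = λ(24g+6), 9g'² = λ²·9g², 81g'³+18g'²+36h' = λ³(81g³+18g²+36h), and 4h'² = λ⁵·4h². If (g',h') ≠ (g,h), then g' = -g/(8g+1), λ = 1/(8g+1), and 32h² - 4g²h - g⁵ = 0. -/

import Mathlib

/-- Two distinct affine (g,h)-coordinates give the same Igusa–Clebsch point only
along the curve 32h² = 4g²h + g⁵. -/
theorem distinct_gh_same_invariants (g h g' h' : ℚ)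
    (hh : h ≠ 0) (hh' : h' ≠ 0) (hg : g ≠ 0) (hg' : g' ≠ 0)
    (lam : ℚ) (hlam : lam ≠ 0)
    (h1 : 24 * g' + 6 = lam * (24 * g + 6))
    (h2 : 9 * g' ^ 2 = lam ^ 2 * (9 * g ^ 2))
    (h3 : 81 * g' ^ 3 + 18 * g' ^ 2 + 36 * h'
      = lam ^ 3 * (81 * g ^ 3 + 18 * g ^ 2 + 36 * h))
    (h4 : 4 * h' ^ 2 = lam ^ 5 * (4 * h ^ 2))
    (hne : (g', h') ≠ (g, h)) :
    g' = -g / (8 * g + 1) ∧ lam = 1 / (8 * g + 1) ∧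
      32 * h ^ 2 - 4 * g ^ 2 * h - g ^ 5 = 0 := by
  -- From h2 : g' = lam*g or g' = -lam*g
  have hcases : (g' - lam * g) * (g' + lam * g) = 0 := by ring_nf; linarith [h2]
  rcases mul_eq_zero.mp hcases with hc | hc
  · -- g' = lam * g, leads to lam = 1 and (g',h') = (g,h), contradiction
    have hg'e : g' = lam * g := by linarith
    have hl1 : lam = 1 := by
      have : 24 * (lam * g) + 6 = lam * (24 * g + 6) := by rw [← hg'e]; exact h1
      nlinarith [this]
    subst hl1
    have hgg : g' = g := by simpa using hg'e
    subst hgg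
    have hhh : h' = h := by nlinarith [h3]
    exact absurd (by rw [hhh]) hne
  · have hg'e : g' = -(lam * g) := by linarith
    subst hg'e
    have hk : lam * (8 * g + 1) = 1 := by linarith [h1]
    have hk0 : (8 * g + 1) ≠ 0 := by
      intro h0
      rw [h0, mul_zero] at hk
      exact one_ne_zero hk.symm
    have hlamval : lam = 1 / (8 * g + 1) := by
      field_simp
      linarith [hk]
    -- h' in terms of g, h, lam
    have hh'eq : 36 * h' = 18 * lam ^ 3 * g ^ 3 + 36 * lam ^ 3 * h := by
      linear_combination h3 + (18 * lam ^ 2 * g ^ 2) * hk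
    -- derive the curve equation
    have key : lam ^ 5 * (lam * (18 * g ^ 3 + 36 * h) ^ 2) = lam ^ 5 * (1296 * h ^ 2) := by
      linear_combination -(36 * h' + 18 * lam ^ 3 * g ^ 3 + 36 * lam ^ 3 * h) * hh'eq + 324 * h4
    have key2 : lam * (18 * g ^ 3 + 36 * h) ^ 2 = 1296 * h ^ 2 :=
      mul_left_cancel₀ (pow_ne_zero 5 hlam) key
    have key3 : (18 * g ^ 3 + 36 * h) ^ 2 = 1296 * h ^ 2 * (8 * g + 1) := by
      have := congrArg (· * (8 * g + 1)) key2
      calc (18 * g ^ 3 + 36 * h) ^ 2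
          = lam * (8 * g + 1) * (18 * g ^ 3 + 36 * h) ^ 2 := by rw [hk]; ring
        _ = 1296 * h ^ 2 * (8 * g + 1) := by linear_combination this
    have curve : 32 * h ^ 2 - 4 * g ^ 2 * h - g ^ 5 = 0 := by
      have hgfac : g * (32 * h ^ 2 - 4 * g ^ 2 * h - g ^ 5) = g * 0 := by
        linear_combination (-1/324 : ℚ) * key3
      exact mul_left_cancel₀ hg hgfac
    refine ⟨?_, hlamval, curve⟩
    rw [eq_div_iff hk0]
    linear_combination (-g) * hk
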